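/- In a countable Hindman semigroup, the notions IIP and DIP coincide: a subset A of a countable semigroup (M,·) in which the IIP sets are partition regular is IIP if and only if it is DIP. -/

import Mathlib

open Filter FirstOrder FirstOrder.Language

attribute [local instance] Ultrafilter.mul

/-! ## Combinatorial notions in a semigroup -/

/-- `X` is an IP set: it contains `FP u` (all finite products, in increasing order of indices,
of distinct terms) of some sequence `u`. -/
def IsIP {M : Type*} [Semigroup M] (X : Set M) : Prop :=
  ∃ u : Stream' M, Hindman.FP u ⊆ X

/-- `X` is IIP (infinitely IP): it contains an infinite set of the form `FP u`. -/
def IsIIP {M : Type*} [Semigroup M] (X : Set M) : Prop :=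
  ∃ u : Stream' M, Hindman.FP u ⊆ X ∧ (Hindman.FP u).Infinite

/-- `X` is DIP (distinctly IP): it contains `FP u` for an injective sequence `u`. -/
def IsDIP {M : Type*} [Semigroup M] (X : Set M) : Prop :=
  ∃ u : Stream' M, Function.Injective u ∧ Hindman.FP u ⊆ X

/-- An ultrafilter is nonprincipal if it is not of the form `{A | a ∈ A}` for any `a`. -/
def Ultrafilter.Nonprincipal {M : Type*} (U : Ultrafilter M) : Prop :=
  ∀ a : M, U ≠ pure a

/-- A semigroup is moving if the product of two nonprincipal ultrafilters
(for the ultrafilter product `A ∈ U * V ↔ {m | {n | m * n ∈ A} ∈ V} ∈ U`) is nonprincipal. -/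
def IsMoving (M : Type*) [Semigroup M] : Prop :=
  ∀ U V : Ultrafilter M, U.Nonprincipal → V.Nonprincipal → (U * V).Nonprincipal

/-! ## Types over a semigroup structure -/

/-- Formulas in one free variable, with parameters from `M`. -/
abbrev Form1 (L : Language) (M : Type*) := L.Formula (M ⊕ Fin 1)

/-- Formulas in two free variables (`x` and `y`), with parameters from `M`. -/
abbrev Form2 (L : Language) (M : Type*) := L.Formula (M ⊕ Fin 2)

/-- Realization of a 1-variable formula with parameters at the point `a`. -/
def Realize1 {L : Language} {M : Type*} (S : L.Structure M) (φ : Form1 L M) (a : M) : Prop :=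
  @Formula.Realize L M S _ φ (Sum.elim id fun _ => a)

/-- Realization of a 2-variable formula with parameters at the pair `(a, b)`. -/
def Realize2 {L : Language} {M : Type*} (S : L.Structure M) (φ : Form2 L M) (a b : M) : Prop :=
  @Formula.Realize L M S _ φ (Sum.elim id ![a, b])

/-- A complete 1-type over the structure `S` (with parameters for all elements of `M`):
a complete, finitely satisfiable (in `S`) set of formulas in one free variable. -/
def IsCompleteType1 {L : Language} {M : Type*} (S : L.Structure M)
    (p : Set (Form1 L M)) : Prop :=
  (∀ φ : Form1 L M, φ ∈ p ↔ φ.not ∉ p) ∧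
    ∀ s : Finset (Form1 L M), ↑s ⊆ p → ∃ a : M, ∀ φ ∈ s, Realize1 S φ a

/-- A complete 2-type over the structure `S` (with parameters for all elements of `M`). -/
def IsCompleteType2 {L : Language} {M : Type*} (S : L.Structure M)
    (q : Set (Form2 L M)) : Prop :=
  (∀ φ : Form2 L M, φ ∈ q ↔ φ.not ∉ q) ∧
    ∀ s : Finset (Form2 L M), ↑s ⊆ q → ∃ a b : M, ∀ φ ∈ s, Realize2 S φ a b

/-- `substX u φ` is `φ(u, y)`: the element `u` is substituted for the variable `x`. -/
def substX {L : Language} {M : Type*} (u : M) (φ : Form2 L M) : Form2 L M :=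
  φ.subst (Sum.elim (fun m => Term.var (Sum.inl m))
    ![Term.var (Sum.inl u), Term.var (Sum.inr 1)])

/-- A 2-type `q(x, y)` is independent if for every `φ(x, y) ∈ q` there is `u ∈ M` with
`φ(u, y) ∈ q`. -/
def IsIndependent {L : Language} {M : Type*} (q : Set (Form2 L M)) : Prop :=
  ∀ φ ∈ q, ∃ u : M, substX u φ ∈ q

/-- `toX φ` views the 1-variable formula `φ` as a 2-variable formula `φ(x)`. -/
def toX {L : Language} {M : Type*} (φ : Form1 L M) : Form2 L M :=
  φ.subst (Sum.elim (fun m => Term.var (Sum.inl m)) fun _ => Term.var (Sum.inr 0))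

/-- `toY φ` views the 1-variable formula `φ` as a 2-variable formula `φ(y)`. -/
def toY {L : Language} {M : Type*} (φ : Form1 L M) : Form2 L M :=
  φ.subst (Sum.elim (fun m => Term.var (Sum.inl m)) fun _ => Term.var (Sum.inr 1))

/-- `toXY f φ` is `φ(x · y)`, where `f` is the distinguished binary function symbol. -/
def toXY {L : Language} {M : Type*} (f : L.Functions 2) (φ : Form1 L M) : Form2 L M :=
  φ.subst (Sum.elim (fun m => Term.var (Sum.inl m))
    fun _ => Term.func f ![Term.var (Sum.inr 0), Term.var (Sum.inr 1)])

/-- A complete 1-type `p` over `S` is idempotent (with respect to the binary function symbol `f`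
interpreted as the semigroup operation) if there is an independent complete 2-type `q(x, y)` with
`p(x) ⊆ q`, `p(y) ⊆ q` and `p(x · y) ⊆ q`. -/
def IsIdempotentType {L : Language} {M : Type*} (S : L.Structure M) (f : L.Functions 2)
    (p : Set (Form1 L M)) : Prop :=
  IsCompleteType1 S p ∧
    ∃ q : Set (Form2 L M), IsCompleteType2 S q ∧ IsIndependent q ∧
      (∀ φ ∈ p, toX φ ∈ q) ∧ (∀ φ ∈ p, toY φ ∈ q) ∧ (∀ φ ∈ p, toXY f φ ∈ q)

/-- A 1-type over `S` is principal if it is realized by an element of `M`. -/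
def IsPrincipalType {L : Language} {M : Type*} (S : L.Structure M)
    (p : Set (Form1 L M)) : Prop :=
  ∃ a : M, ∀ φ ∈ p, Realize1 S φ a

private theorem FP_tail_infinite {M : Type*} [Semigroup M] {u : Stream' M}
    (h : (Hindman.FP u).Infinite) : (Hindman.FP u.tail).Infinite := by
  by_contra hfin
  rw [Set.not_infinite] at hfin
  apply h
  have hsub : Hindman.FP u ⊆
      insert u.head (Hindman.FP u.tail ∪ (u.head * ·) '' Hindman.FP u.tail) := by
    intro m hm
    cases hm with
    | head' => exact Set.mem_insert _ _
    | tail' _ _ h' => exact Set.mem_insert_iff.mpr (Or.inr (Or.inl h'))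
    | cons' _ m h' => exact Set.mem_insert_iff.mpr (Or.inr (Or.inr ⟨m, h', rfl⟩))
  exact (((hfin.union (hfin.image _)).insert _).subset hsub)

private theorem step_aux {M : Type*} [Semigroup M] [Nonempty M]
    (hH : ∀ A : Set M, IsIIP A → ∀ Y Z : Set M, A = Y ∪ Z → IsIIP Y ∨ IsIIP Z)
    (B : Set M) (s : Finset M) :
    ∃ (a : M) (B' : Set M), IsIIP B →
      a ∈ B ∧ a ∉ (s : Set M) ∧ IsIIP B' ∧ B' ⊆ B ∧ ∀ b ∈ B', a * b ∈ B := by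
  by_cases hB : IsIIP B
  · have hsplit := hH B hB (B ∩ ↑s) (B \ ↑s) (Set.inter_union_diff B ↑s).symm
    have h1 : ¬ IsIIP (B ∩ ↑s) := by
      rintro ⟨u, hu, hinf⟩
      exact hinf (s.finite_toSet.subset (hu.trans Set.inter_subset_right))
    obtain ⟨u, hu, hinf⟩ := hsplit.resolve_left h1
    refine ⟨u.head, Hindman.FP u.tail, fun _ => ?_⟩
    have hh : u.head ∈ B \ ↑s := hu (Hindman.FP.head u)
    refine ⟨hh.1, hh.2, ⟨u.tail, subset_rfl, FP_tail_infinite hinf⟩, ?_, ?_⟩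
    · intro b hb; exact (hu (Hindman.FP.tail u b hb)).1
    · intro b hb; exact (hu (Hindman.FP.cons u b hb)).1
  · exact ⟨Classical.arbitrary M, ∅, fun h => absurd h hB⟩

/-- in a countable Hindman semigroup (IIP sets are partition regular), the
notions IIP and DIP coincide. -/
theorem isIIP_iff_isDIP_of_hindman {M : Type*} [Semigroup M] [Countable M]
    (hH : ∀ A : Set M, IsIIP A → ∀ Y Z : Set M, A = Y ∪ Z → IsIIP Y ∨ IsIIP Z)
    (A : Set M) : IsIIP A ↔ IsDIP A := by
  classical
  constructor
  · rintro ⟨u0, hu0, hinf0⟩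
    haveI : Nonempty M := ⟨u0.head⟩
    choose a B' hstep using step_aux hH
    let st : ℕ → Set M × Finset M := fun n =>
      Nat.rec (Hindman.FP u0, (∅ : Finset M))
        (fun _ p => (B' p.1 p.2, insert (a p.1 p.2) p.2)) n
    let v : Stream' M := fun n => a (st n).1 (st n).2
    have hIIP : ∀ n, IsIIP (st n).1 := by
      intro n
      induction n with
      | zero => exact ⟨u0, subset_rfl, hinf0⟩
      | succ n ih => exact (hstep (st n).1 (st n).2 ih).2.2.1
    have key : ∀ n, v n ∈ (st n).1 ∧ v n ∉ ((st n).2 : Set M) ∧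
        (st (n+1)).1 ⊆ (st n).1 ∧ ∀ b ∈ (st (n+1)).1, v n * b ∈ (st n).1 := by
      intro n
      obtain ⟨h1, h2, _h3, h4, h5⟩ := hstep (st n).1 (st n).2 (hIIP n)
      exact ⟨h1, h2, h4, h5⟩
    have hmem_s : ∀ n m, m < n → v m ∈ ((st n).2 : Set M) := by
      intro n
      induction n with
      | zero => intro m hm; exact absurd hm (Nat.not_lt_zero m)
      | succ n ih =>
        intro m hm
        have hst : (st (n+1)).2 = insert (v n) (st n).2 := rfl
        rw [hst]
        rcases Nat.lt_succ_iff_lt_or_eq.mp hm with h | h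
        · exact Finset.mem_insert.mpr (Or.inr (ih m h))
        · subst h; exact Finset.mem_insert_self _ _
    have hFP : ∀ (w : Stream' M) m, m ∈ Hindman.FP w →
        ∀ n, w = Stream'.drop n v → m ∈ (st n).1 := by
      intro w m hm
      induction hm with
      | head' w =>
        intro n hn; subst hn
        rw [Stream'.head_drop]
        exact (key n).1
      | tail' w m _ ih =>
        intro n hn; subst hn
        exact (key n).2.2.1 (ih (n+1) Stream'.tail_drop')
      | cons' w m _ ih =>
        intro n hn; subst hn
        rw [Stream'.head_drop]
        exact (key n).2.2.2 m (ih (n+1) Stream'.tail_drop')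
    have hlt : ∀ i j, i < j → v i ≠ v j := by
      intro i j h hEq
      exact (key j).2.1 (hEq ▸ hmem_s j i h)
    refine ⟨v, ?_, ?_⟩
    · intro i j hij
      rcases lt_trichotomy i j with h | h | h
      · exact absurd hij (hlt i j h)
      · exact h
      · exact absurd hij.symm (hlt j i h)
    · intro m hm
      exact hu0 (hFP v m hm 0 Stream'.drop_zero.symm)
  · rintro ⟨u, huinj, hsub⟩
    refine ⟨u, hsub, ?_⟩
    have hr : Set.range u ⊆ Hindman.FP u := by
      rintro _ ⟨n, rfl⟩; exact Hindman.FP.singleton u n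
    exact (Set.infinite_range_of_injective huinj).mono hr
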